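/- Let v ∈ ℝⁿ be a vector lying in the trace-zero hyperplane (∑_j v_j = 0) and let λ ∈ ℝ with |λ| ≤ 1/(2‖v‖_∞) and v ≠ 0. If W_1, …, W_n are i.i.d. Exp(1) random variables and S = ∑_j v_j log W_j, then log E[e^{λS}] = ∑_j log Γ(1 + λ v_j), and there exists an absolute constant C such that |log E[e^{λS}] − (π²/12) λ² ∑_j v_j²| ≤ C |λ|³ ∑_j |v_j|³. -/

import Mathlib

open MeasureTheory ProbabilityTheory
open Finset Filter Topology Nat Set
open scoped NNReal ENNReal


lemma log1p_third {x : ℝ} (hx : |x| ≤ 1/2) :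
    |Real.log (1+x) - x + x^2/2| ≤ 2 * |x|^3 := by
  have h1 : |(-x)| < 1 := by rw [abs_neg]; linarith [abs_nonneg x]
  have key := Real.abs_log_sub_add_sum_range_le h1 2
  simp only [Finset.sum_range_succ, Finset.sum_range_zero] at key
  have e2 : (0:ℝ) + (-x)^(0+1)/(((0:ℕ):ℝ)+1) + (-x)^(1+1)/(((1:ℕ):ℝ)+1) = -x + x^2/2 := by
    push_cast; ring
  rw [e2, show (1:ℝ) - (-x) = 1 + x from by ring, abs_neg] at key
  rw [show Real.log (1+x) - x + x^2/2 = -x + x^2/2 + Real.log (1+x) from by ring]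
  refine key.trans ?_
  rw [div_le_iff₀ (by linarith [abs_nonneg x])]
  have h3 : (0:ℝ) ≤ |x|^3 := pow_nonneg (abs_nonneg x) 3
  have : |x|^(2+1) = |x|^3 := by norm_num
  nlinarith [mul_nonneg h3 (by linarith : (0:ℝ) ≤ 1 - 2*|x|)]

lemma log1p_second {x : ℝ} (hx : |x| ≤ 1/2) :
    |Real.log (1+x) - x| ≤ 2 * x^2 := by
  have h1 : |(-x)| < 1 := by rw [abs_neg]; linarith [abs_nonneg x]
  have key := Real.abs_log_sub_add_sum_range_le h1 1
  simp only [Finset.sum_range_succ, Finset.sum_range_zero] at key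
  have e2 : (0:ℝ) + (-x)^(0+1)/(((0:ℕ):ℝ)+1) = -x := by push_cast; ring
  rw [e2, show (1:ℝ) - (-x) = 1 + x from by ring, abs_neg] at key
  rw [show Real.log (1+x) - x = -x + Real.log (1+x) from by ring]
  refine key.trans ?_
  rw [div_le_iff₀ (by linarith [abs_nonneg x])]
  have h3 : (0:ℝ) ≤ x^2 := sq_nonneg x
  have e3 : |x|^(1+1) = x^2 := by rw [show 1+1=2 from rfl, sq_abs]
  rw [e3]
  nlinarith [mul_nonneg h3 (by linarith : (0:ℝ) ≤ 1 - 2*|x|)]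

noncomputable def lgT (s : ℝ) (k : ℕ) : ℝ := s/((k:ℝ)+1) - Real.log (1 + s/((k:ℝ)+1))

lemma abs_x_le {s : ℝ} (k : ℕ) : |s/((k:ℝ)+1)| ≤ |s| := by
  rw [abs_div, abs_of_pos (by positivity : (0:ℝ) < (k:ℝ)+1)]
  exact div_le_self (abs_nonneg s) (by simp)

lemma hasSum_inv_sq : HasSum (fun k : ℕ => 1/(((k:ℝ))+1)^2) (Real.pi^2/6) := by
  have h2 := (hasSum_nat_add_iff (f := fun n : ℕ => 1/(n:ℝ)^2) 1).mpr
    (by simpa using hasSum_zeta_two)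
  convert h2 using 2 with k
  case e'_3 => rfl
  push_cast; ring

lemma summable_lgT {s : ℝ} (hs : |s| ≤ 1/2) : Summable (lgT s) := by
  have hb : Summable (fun k : ℕ => 2*s^2 * (1/(((k:ℝ))+1)^2)) :=
    (hasSum_inv_sq.summable).mul_left _
  refine Summable.of_abs (hb.of_nonneg_of_le (fun k => abs_nonneg _) (fun k => ?_))
  have hx : |s/((k:ℝ)+1)| ≤ 1/2 := (abs_x_le k).trans hs
  have := log1p_second hx
  rw [show lgT s k = -(Real.log (1 + s/((k:ℝ)+1)) - s/((k:ℝ)+1)) from by rw [lgT]; ring, abs_neg]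
  refine this.trans (le_of_eq ?_)
  rw [div_pow]; ring

lemma lgT_third {s : ℝ} (hs : |s| ≤ 1/2) (k : ℕ) :
    |lgT s k - s^2/2 * (1/(((k:ℝ))+1)^2)| ≤ 2*|s|^3 * (1/(((k:ℝ))+1)^2) := by
  have hx : |s/((k:ℝ)+1)| ≤ 1/2 := (abs_x_le k).trans hs
  have h := log1p_third hx
  have e : lgT s k - s^2/2 * (1/(((k:ℝ))+1)^2)
      = -(Real.log (1 + s/((k:ℝ)+1)) - s/((k:ℝ)+1) + (s/((k:ℝ)+1))^2/2) := by
    rw [lgT]; field_simp; ring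
  rw [e, abs_neg]
  refine h.trans ?_
  have hk1 : (1:ℝ) ≤ (k:ℝ)+1 := by simp
  have e2 : |s/((k:ℝ)+1)|^3 = |s|^3 / ((k:ℝ)+1)^3 := by
    rw [abs_div, abs_of_pos (by positivity : (0:ℝ) < (k:ℝ)+1), div_pow]
  rw [e2]
  rw [show 2*|s|^3 * (1/((k:ℝ)+1)^2) = 2 * (|s|^3 / ((k:ℝ)+1)^2) from by ring]
  have : |s|^3 / ((k:ℝ)+1)^3 ≤ |s|^3 / ((k:ℝ)+1)^2 := by
    apply div_le_div_of_nonneg_left (pow_nonneg (abs_nonneg s) 3) (by positivity)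
    exact pow_le_pow_right₀ (by linarith) (by norm_num)
  linarith

lemma one_add_pos {s : ℝ} (hs : |s| ≤ 1/2) (k : ℕ) : (0:ℝ) < 1 + s/((k:ℝ)+1) := by
  have h := abs_le.mp ((abs_x_le (s := s) k).trans hs)
  linarith [h.1]

lemma logGammaSeq_eq (s : ℝ) (hs : |s| ≤ 1/2) (n : ℕ) (hn : 1 ≤ n) :
    Real.log (Real.GammaSeq (1+s) n)
      = s * (Real.log n - ∑ k ∈ range (n+1), 1/((k:ℝ)+1)) - Real.log (((n:ℝ)+1)/n)
        + ∑ k ∈ range (n+1), lgT s k := by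
  have hn0 : (0:ℝ) < n := by exact_mod_cast hn
  have hfac : ∀ m : ℕ, ((m ! : ℕ) : ℝ) ≠ 0 := fun m => by exact_mod_cast m.factorial_ne_zero
  have hP : ∀ k ∈ range (n+1), (0:ℝ) < 1 + s/((k:ℝ)+1) := fun k _ => one_add_pos hs k
  set P := ∏ k ∈ range (n+1), (1 + s/((k:ℝ)+1)) with hPdef
  have hPpos : 0 < P := Finset.prod_pos hP
  have hprod : ∏ j ∈ range (n+1), (1 + s + (j:ℝ)) = ((n+1)! : ℕ) * P := by
    have h1 : ∀ j ∈ range (n+1), (1 + s + (j:ℝ)) = ((j:ℝ)+1) * (1 + s/((j:ℝ)+1)) := by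
      intro j _
      have : ((j:ℝ)+1) ≠ 0 := by positivity
      field_simp
      ring
    rw [Finset.prod_congr rfl h1, Finset.prod_mul_distrib]
    congr 1
    calc ∏ j ∈ range (n+1), ((j:ℝ)+1)
        = ((∏ j ∈ range (n+1), (j+1) : ℕ) : ℝ) := by push_cast; rfl
      _ = (((n+1)! : ℕ) : ℝ) := by rw [Finset.prod_range_add_one_eq_factorial]
  rw [Real.GammaSeq, hprod]
  rw [Real.log_div (by positivity) (by positivity), Real.log_mul (by positivity) (hfac n),
    Real.log_mul (by exact_mod_cast (n+1).factorial_ne_zero) hPpos.ne',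
    Real.log_rpow hn0, hPdef, Real.log_prod (fun k hk => (hP k hk).ne')]
  have hfs : (((n+1)! : ℕ) : ℝ) = ((n:ℝ)+1) * ((n ! : ℕ) : ℝ) := by
    rw [Nat.factorial_succ]; push_cast; ring
  rw [hfs, Real.log_mul (by positivity) (hfac n),
    Real.log_div (by positivity) hn0.ne']
  have hsum1 : ∑ k ∈ range (n+1), lgT s k
      = s * (∑ k ∈ range (n+1), 1/((k:ℝ)+1)) - ∑ k ∈ range (n+1), Real.log (1 + s/((k:ℝ)+1)) := by
    simp only [lgT, Finset.sum_sub_distrib, Finset.mul_sum]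
    congr 1
    exact Finset.sum_congr rfl fun k _ => by rw [div_eq_mul_one_div]
  rw [hsum1]
  ring

lemma harmonic_cast (m : ℕ) : ((harmonic m : ℚ) : ℝ) = ∑ k ∈ range m, 1/((k:ℝ)+1) := by
  rw [harmonic]
  push_cast
  exact Finset.sum_congr rfl fun k _ => by rw [one_div]

lemma tendsto_log_succ_div : Tendsto (fun n : ℕ => Real.log (((n:ℝ)+1)/n)) atTop (𝓝 0) := by
  have h1 : Tendsto (fun n : ℕ => ((n:ℝ)+1)/n) atTop (𝓝 1) := by
    have h2 : Tendsto (fun n : ℕ => 1 + 1/(n:ℝ)) atTop (𝓝 (1+0)) :=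
      tendsto_const_nhds.add tendsto_one_div_atTop_nhds_zero_nat
    rw [add_zero] at h2
    apply h2.congr'
    filter_upwards [eventually_ge_atTop 1] with n hn
    have : (n:ℝ) ≠ 0 := Nat.cast_ne_zero.mpr (by omega)
    field_simp
  have := (Real.continuousAt_log one_ne_zero).tendsto.comp h1
  simpa [Function.comp_def] using this

lemma logGamma_expansion {s : ℝ} (hs : |s| ≤ 1/2) :
    Real.log (Real.Gamma (1+s)) = -(Real.eulerMascheroniConstant * s) + ∑' k, lgT s k := by
  have hΓpos : 0 < Real.Gamma (1+s) := by
    apply Real.Gamma_pos_of_pos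
    have := abs_le.mp hs
    linarith [this.1]
  have T1 : Tendsto (fun n : ℕ => Real.log (Real.GammaSeq (1+s) n)) atTop
      (𝓝 (Real.log (Real.Gamma (1+s)))) :=
    ((Real.continuousAt_log hΓpos.ne').tendsto).comp (Real.GammaSeq_tendsto_Gamma (1+s))
  have hsum := summable_lgT hs
  have hS : Tendsto (fun n : ℕ => ∑ k ∈ range (n+1), lgT s k) atTop (𝓝 (∑' k, lgT s k)) :=
    (hsum.hasSum.tendsto_sum_nat).comp (tendsto_add_atTop_nat 1)
  have hEM : Tendsto (fun n : ℕ => Real.eulerMascheroniSeq' (n+1)) atTop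
      (𝓝 Real.eulerMascheroniConstant) :=
    Real.tendsto_eulerMascheroniSeq'.comp (tendsto_add_atTop_nat 1)
  have T2 : Tendsto (fun n : ℕ =>
      s * (-(Real.eulerMascheroniSeq' (n+1)) - Real.log (((n:ℝ)+1)/n))
        - Real.log (((n:ℝ)+1)/n) + ∑ k ∈ range (n+1), lgT s k) atTop
      (𝓝 (s * (-(Real.eulerMascheroniConstant) - 0) - 0 + ∑' k, lgT s k)) :=
    ((tendsto_const_nhds.mul (hEM.neg.sub tendsto_log_succ_div)).sub
      tendsto_log_succ_div).add hS
  have heq : (fun n : ℕ => Real.log (Real.GammaSeq (1+s) n)) =ᶠ[atTop]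
      (fun n : ℕ =>
        s * (-(Real.eulerMascheroniSeq' (n+1)) - Real.log (((n:ℝ)+1)/n))
          - Real.log (((n:ℝ)+1)/n) + ∑ k ∈ range (n+1), lgT s k) := by
    filter_upwards [eventually_ge_atTop 1] with n hn
    rw [logGammaSeq_eq s hs n hn]
    have hn0 : (0:ℝ) < n := by exact_mod_cast hn
    have hem : Real.eulerMascheroniSeq' (n+1)
        = (∑ k ∈ range (n+1), 1/((k:ℝ)+1)) - Real.log ((n:ℝ)+1) := by
      rw [Real.eulerMascheroniSeq', if_neg (Nat.succ_ne_zero n), harmonic_cast]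
      push_cast
      ring
    have hld : Real.log (((n:ℝ)+1)/n) = Real.log ((n:ℝ)+1) - Real.log n :=
      Real.log_div (by positivity) hn0.ne'
    rw [hem, hld]
    ring
  have := tendsto_nhds_unique (T1.congr' heq) T2
  rw [this]
  ring

lemma analytic_bound {s : ℝ} (hs : |s| ≤ 1/2) :
    |Real.log (Real.Gamma (1+s)) + Real.eulerMascheroniConstant * s
        - Real.pi^2/12 * s^2| ≤ (Real.pi^2/3) * |s|^3 := by
  rw [logGamma_expansion hs]
  have hz : HasSum (fun k : ℕ => s^2/2 * (1/(((k:ℝ))+1)^2)) (Real.pi^2/12 * s^2) := by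
    have := hasSum_inv_sq.mul_left (s^2/2)
    rwa [show s^2/2 * (Real.pi^2/6) = Real.pi^2/12 * s^2 from by ring] at this
  have hg : HasSum (fun k : ℕ => 2*|s|^3 * (1/(((k:ℝ))+1)^2)) (2*|s|^3 * (Real.pi^2/6)) :=
    hasSum_inv_sq.mul_left _
  have hdiff : -(Real.eulerMascheroniConstant * s) + (∑' k, lgT s k)
      + Real.eulerMascheroniConstant * s - Real.pi^2/12 * s^2
      = ∑' k, (lgT s k - s^2/2 * (1/(((k:ℝ))+1)^2)) := by
    rw [Summable.tsum_sub (summable_lgT hs) hz.summable, hz.tsum_eq]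
    ring
  rw [hdiff]
  have hb := tsum_of_norm_bounded hg (fun k => by
    rw [Real.norm_eq_abs]; exact lgT_third hs k)
  rw [Real.norm_eq_abs] at hb
  refine hb.trans (le_of_eq ?_)
  ring
lemma exponentialPDFReal_eq_ite (x : ℝ) :
    exponentialPDFReal 1 x = if 0 ≤ x then Real.exp (-x) else 0 := by
  rw [exponentialPDFReal, gammaPDFReal]
  simp [Real.Gamma_one, Real.rpow_zero]

lemma expMoment (t : ℝ) (ht : -1 < t) :
    Integrable (fun x => Real.exp (t * Real.log x)) (expMeasure 1)
    ∧ ∫ x, Real.exp (t * Real.log x) ∂(expMeasure 1) = Real.Gamma (1+t) := by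
  set g : ℝ → ℝ := fun x => Real.exp (t * Real.log x) with hgdef
  set f : ℝ → ℝ≥0 := fun x => Real.toNNReal (exponentialPDFReal 1 x) with hfdef
  have hfm : Measurable f := (measurable_exponentialPDFReal 1).real_toNNReal
  have hwd : expMeasure 1 = volume.withDensity (fun x => (f x : ℝ≥0∞)) := rfl
  have hfg : (fun x => f x • g x)
      = Set.indicator (Set.Ici (0:ℝ)) (fun x => Real.exp (-x) * Real.exp (t * Real.log x)) := by
    funext x
    rw [NNReal.smul_def, hfdef]
    simp only
    rw [Real.coe_toNNReal _ (exponentialPDFReal_nonneg one_pos x), exponentialPDFReal_eq_ite]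
    by_cases hx : 0 ≤ x
    · rw [if_pos hx, Set.indicator_of_mem (Set.mem_Ici.mpr hx), smul_eq_mul]
    · rw [if_neg hx, Set.indicator_of_notMem (by simpa using hx), zero_smul]
  have hIoi : IntegrableOn (fun x => Real.exp (-x) * Real.exp (t * Real.log x)) (Set.Ioi 0) := by
    have h1 := Real.GammaIntegral_convergent (show (0:ℝ) < t + 1 by linarith)
    simp only [add_sub_cancel_right] at h1
    refine h1.congr_fun (fun x hx => ?_) measurableSet_Ioi
    dsimp only; rw [Real.rpow_def_of_pos hx, mul_comm (Real.log x)]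
  have hIci : IntegrableOn (fun x => Real.exp (-x) * Real.exp (t * Real.log x)) (Set.Ici 0) := by
    rwa [integrableOn_Ici_iff_integrableOn_Ioi]
  have hint : Integrable g (expMeasure 1) := by
    rw [hwd, integrable_withDensity_iff_integrable_smul hfm, hfg]
    exact (integrable_indicator_iff measurableSet_Ici).mpr hIci
  refine ⟨hint, ?_⟩
  rw [hwd, integral_withDensity_eq_integral_smul hfm, hfg,
    integral_indicator measurableSet_Ici, MeasureTheory.integral_Ici_eq_integral_Ioi,
    setIntegral_congr_fun measurableSet_Ioi
      (fun x hx => by simp [Real.rpow_def_of_pos hx, mul_comm] :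
        Set.EqOn _ (fun x => Real.exp (-x) * x ^ t) _),
    Real.Gamma_eq_integral (show (0:ℝ) < 1 + t by linarith),
    show (1:ℝ) + t - 1 = t from by ring]

/-- For `v` in the trace-zero hyperplane, `v ≠ 0`, `|λ| ≤ 1/(2‖v‖_∞)`, and
`W_1, …, W_n` i.i.d. `Exp(1)`, the log-MGF of `S = ∑ v_j log W_j` equals
`∑_j log Γ(1 + λ v_j)`, and there is an absolute constant `C` with
`|log E[e^{λS}] − (π²/12) λ² ∑ v_j²| ≤ C |λ|³ ∑ |v_j|³`. -/
theorem logMGF_exponential_expansion :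
    ∃ C : ℝ, 0 < C ∧
      ∀ (n : ℕ) (hn : 0 < n)
        (Ω : Type) (_ : MeasurableSpace Ω) (μ : Measure Ω) (_ : IsProbabilityMeasure μ)
        (W : Fin n → Ω → ℝ)
        (_ : ∀ j, Measurable (W j))
        (_ : iIndepFun W μ)
        (_ : ∀ j, Measure.map (W j) μ = expMeasure 1)
        (v : Fin n → ℝ) (_ : ∑ j, v j = 0) (_ : v ≠ 0)
        (l : ℝ)
        (_ : |l| ≤ 1 / (2 * Finset.univ.sup'
              (Finset.univ_nonempty_iff.mpr (Fin.pos_iff_nonempty.mp hn))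
              (fun j => |v j|))),
        Real.log (∫ ω, Real.exp (l * ∑ j, v j * Real.log (W j ω)) ∂μ)
            = ∑ j, Real.log (Real.Gamma (1 + l * v j))
          ∧ |Real.log (∫ ω, Real.exp (l * ∑ j, v j * Real.log (W j ω)) ∂μ)
                - Real.pi ^ 2 / 12 * l ^ 2 * ∑ j, (v j) ^ 2|
              ≤ C * |l| ^ 3 * ∑ j, |v j| ^ 3 := by
  refine ⟨Real.pi^2/3, by positivity, ?_⟩
  intro n hn Ω mΩ μ hprob W hWmeas hWindep hWmap v hv0 hvne l hl
  set M := Finset.univ.sup'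
      (Finset.univ_nonempty_iff.mpr (Fin.pos_iff_nonempty.mp hn)) (fun j => |v j|) with hMdef
  obtain ⟨j0, hj0⟩ : ∃ j, v j ≠ 0 := Function.ne_iff.mp hvne
  have hle : ∀ j, |v j| ≤ M := fun j =>
    le_of_le_of_eq (Finset.le_sup' (fun j => |v j|) (Finset.mem_univ j)) hMdef.symm
  have hMpos : 0 < M := lt_of_lt_of_le (abs_pos.mpr hj0) (hle j0)
  have hhalf : ∀ j, |l * v j| ≤ 1/2 := by
    intro j
    rw [abs_mul]
    calc |l| * |v j| ≤ (1/(2*M)) * M :=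
          mul_le_mul hl (hle j) (abs_nonneg _) (by positivity)
      _ = 1/2 := by field_simp
  have hgt : ∀ j, -1 < l * v j := fun j => by linarith [(abs_le.mp (hhalf j)).1]
  set X : Fin n → Ω → ℝ := fun j ω => v j * Real.log (W j ω) with hX
  have hXmeas : ∀ j, Measurable (X j) :=
    fun j => (Real.measurable_log.comp (hWmeas j)).const_mul _
  have hXindep : iIndepFun X μ :=
    hWindep.comp (fun j x => v j * Real.log x) (fun j => Real.measurable_log.const_mul _)
  have hgm : ∀ t : ℝ, Measurable (fun x : ℝ => Real.exp (t * Real.log x)) :=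
    fun t => (Real.measurable_log.const_mul t).exp
  have hint : ∀ j, Integrable (fun ω => Real.exp (l * X j ω)) μ := by
    intro j
    have h2 := (expMoment (l * v j) (hgt j)).1
    rw [← hWmap j] at h2
    have h3 := h2.comp_aemeasurable (hWmeas j).aemeasurable
    refine h3.congr (Filter.Eventually.of_forall fun ω => ?_)
    simp only [Function.comp_apply, hX]
    rw [mul_assoc]
  have hcgf := iIndepFun.cgf_sum hXindep hXmeas (s := Finset.univ) (fun j _ => hint j)
  have hLHS : (∫ ω, Real.exp (l * ∑ j, v j * Real.log (W j ω)) ∂μ)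
      = mgf (∑ j, X j) μ l := by
    simp only [mgf, Finset.sum_apply, hX]
  have hterm : ∀ j, cgf (X j) μ l = Real.log (Real.Gamma (1 + l * v j)) := by
    intro j
    rw [cgf, mgf]
    congr 1
    have h2 := (expMoment (l * v j) (hgt j)).2
    rw [← hWmap j, integral_map (hWmeas j).aemeasurable
      ((hgm (l * v j)).aestronglyMeasurable)] at h2
    rw [← h2]
    exact integral_congr_ae (Filter.Eventually.of_forall fun ω => by
      simp only [hX]; rw [mul_assoc])
  have part1 : Real.log (∫ ω, Real.exp (l * ∑ j, v j * Real.log (W j ω)) ∂μ)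
      = ∑ j, Real.log (Real.Gamma (1 + l * v j)) := by
    calc Real.log (∫ ω, Real.exp (l * ∑ j, v j * Real.log (W j ω)) ∂μ)
        = cgf (∑ j, X j) μ l := by rw [cgf, ← hLHS]
      _ = ∑ j, cgf (X j) μ l := hcgf
      _ = ∑ j, Real.log (Real.Gamma (1 + l * v j)) :=
          Finset.sum_congr rfl fun j _ => hterm j
  refine ⟨part1, ?_⟩
  rw [part1]
  set γ := Real.eulerMascheroniConstant with hγ
  have key : ∑ j, Real.log (Real.Gamma (1 + l * v j)) - Real.pi^2/12 * l^2 * ∑ j, (v j)^2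
      = ∑ j, (Real.log (Real.Gamma (1 + l * v j)) + γ * (l * v j)
          - Real.pi^2/12 * (l * v j)^2) := by
    rw [Finset.sum_sub_distrib, Finset.sum_add_distrib]
    have e1 : ∑ j, γ * (l * v j) = (γ * l) * ∑ j, v j := by
      rw [Finset.mul_sum]
      exact Finset.sum_congr rfl fun j _ => by ring
    have e2 : ∑ j, Real.pi^2/12 * (l * v j)^2 = Real.pi^2/12 * l^2 * ∑ j, (v j)^2 := by
      rw [Finset.mul_sum]
      exact Finset.sum_congr rfl fun j _ => by ring
    rw [e1, hv0, mul_zero, e2]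
    ring
  rw [key]
  refine (Finset.abs_sum_le_sum_abs _ _).trans ?_
  calc ∑ j, |Real.log (Real.Gamma (1 + l * v j)) + γ * (l * v j)
          - Real.pi^2/12 * (l * v j)^2|
      ≤ ∑ j, (Real.pi^2/3) * |l * v j|^3 :=
        Finset.sum_le_sum fun j _ => analytic_bound (hhalf j)
    _ = Real.pi^2/3 * |l|^3 * ∑ j, |v j|^3 := by
        rw [Finset.mul_sum]
        exact Finset.sum_congr rfl fun j _ => by rw [abs_mul, mul_pow]; ring
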